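/- Let f : ℝⁿ → ℝ ∪ {±∞} be a proper closed convex function. A subset F* ⊆ epi f* is a K-minimal exposed face of epi f* if and only if there exists x̄ ∈ dom f with ∂f(x̄) ≠ ∅ such that F* = {(u, f*(u)) ∈ ℝⁿ × ℝ : u ∈ ∂f(x̄)}. -/

import Mathlib

open Matrix Set
open scoped Pointwise

noncomputable section

/-- The epigraph of an extended-real-valued function on ℝⁿ. -/
def epi (n : ℕ) (f : (Fin n → ℝ) → EReal) : Set ((Fin n → ℝ) × ℝ) :=
  {p | f p.1 ≤ (p.2 : EReal)}

/-- The Legendre–Fenchel conjugate f*(u) = sup_x (⟨x,u⟩ − f(x)). -/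
def conj (n : ℕ) (f : (Fin n → ℝ) → EReal) (u : Fin n → ℝ) : EReal :=
  ⨆ x : Fin n → ℝ, (((x ⬝ᵥ u : ℝ) : EReal) - f x)

/-- The subdifferential ∂g(x₀) = {u : ∀x, g(x) ≥ g(x₀) + ⟨u, x − x₀⟩}. -/
def subdiff (n : ℕ) (g : (Fin n → ℝ) → EReal) (x₀ : Fin n → ℝ) : Set (Fin n → ℝ) :=
  {u | ∀ x : Fin n → ℝ, g x₀ + ((u ⬝ᵥ (x - x₀) : ℝ) : EReal) ≤ g x}

/-- The ordering cone K = {0}ⁿ × [0,∞) in ℝⁿ × ℝ. -/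
def Kcone (n : ℕ) : Set ((Fin n → ℝ) × ℝ) := {p | p.1 = 0 ∧ 0 ≤ p.2}

/-- y is K-minimal in A : ({y} − (K \ (−K))) ∩ A = ∅. -/
def KMinPt (n : ℕ) (A : Set ((Fin n → ℝ) × ℝ)) (y : (Fin n → ℝ) × ℝ) : Prop :=
  ({y} - (Kcone n \ (-Kcone n))) ∩ A = ∅

/-- The hyperplane H(u,s,α) = {(x,r) : ⟨x,u⟩ + r·s = α} in ℝⁿ × ℝ. -/
def Hyp (n : ℕ) (u : Fin n → ℝ) (s α : ℝ) : Set ((Fin n → ℝ) × ℝ) :=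
  {p | p.1 ⬝ᵥ u + p.2 * s = α}

/-- H(u,s,α) is a supporting hyperplane to A. -/
def IsSuppHyp (n : ℕ) (A : Set ((Fin n → ℝ) × ℝ)) (u : Fin n → ℝ) (s α : ℝ) : Prop :=
  (u, s) ≠ 0 ∧ (Hyp n u s α ∩ A).Nonempty ∧ ∀ p ∈ A, p.1 ⬝ᵥ u + p.2 * s ≤ α

/-- E is an exposed face of A: E = H ∩ A for some supporting hyperplane H of A. -/
def IsExpFace (n : ℕ) (A E : Set ((Fin n → ℝ) × ℝ)) : Prop :=
  ∃ (u : Fin n → ℝ) (s α : ℝ), IsSuppHyp n A u s α ∧ E = Hyp n u s α ∩ A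

/-- E is a K-minimal exposed face of A: an exposed face all of whose points are
K-minimal in A. -/
def IsKMinExpFace (n : ℕ) (A E : Set ((Fin n → ℝ) × ℝ)) : Prop :=
  IsExpFace n A E ∧ ∀ y ∈ E, KMinPt n A y

/-- The duality map Ψ(F*) := ⋂_{(u,f*(u)) ∈ F*} {(x,f(x)) : u ∈ ∂f(x)}. -/
def Psi (n : ℕ) (f : (Fin n → ℝ) → EReal) (Fs : Set ((Fin n → ℝ) × ℝ)) :
    Set ((Fin n → ℝ) × ℝ) :=
  ⋂ q ∈ {q ∈ Fs | (q.2 : EReal) = conj n f q.1},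
    {p | (p.2 : EReal) = f p.1 ∧ q.1 ∈ subdiff n f p.1}

/-- The inverse duality map Ψ*(F) := ⋂_{(x,f(x)) ∈ F} {(u,f*(u)) : u ∈ ∂f(x)}. -/
def PsiStar (n : ℕ) (f : (Fin n → ℝ) → EReal) (F : Set ((Fin n → ℝ) × ℝ)) :
    Set ((Fin n → ℝ) × ℝ) :=
  ⋂ p ∈ {p ∈ F | (p.2 : EReal) = f p.1},
    {q | (q.2 : EReal) = conj n f q.1 ∧ q.1 ∈ subdiff n f p.1}

section Helpers

variable {n : ℕ} {f : (Fin n → ℝ) → EReal}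

lemma term_le_conj (u x : Fin n → ℝ) :
    ((x ⬝ᵥ u : ℝ) : EReal) - f x ≤ conj n f u :=
  le_iSup (fun x : Fin n → ℝ => ((x ⬝ᵥ u : ℝ) : EReal) - f x) x

lemma fenchel_young {xb : Fin n → ℝ} {a : ℝ} (hxb : f xb = (a : ℝ)) (u : Fin n → ℝ) :
    ((xb ⬝ᵥ u - a : ℝ) : EReal) ≤ conj n f u := by
  have h := term_le_conj (f := f) u xb
  rwa [hxb, ← EReal.coe_sub] at h

lemma conj_ne_bot (hdom : ∃ x, f x ≠ ⊤) (hbot : ∀ x, f x ≠ ⊥) (u : Fin n → ℝ) :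
    conj n f u ≠ ⊥ := by
  obtain ⟨x, hx⟩ := hdom
  obtain ⟨a, ha⟩ : ∃ a : ℝ, f x = a := ⟨(f x).toReal, (EReal.coe_toReal hx (hbot x)).symm⟩
  have h := fenchel_young ha u
  intro hc
  rw [hc, le_bot_iff] at h
  exact (EReal.coe_ne_bot _) h

lemma mem_subdiff_iff (hbot : ∀ x, f x ≠ ⊥) {xb : Fin n → ℝ} {a : ℝ}
    (hxb : f xb = (a : ℝ)) (u : Fin n → ℝ) :
    u ∈ subdiff n f xb ↔ conj n f u = ((xb ⬝ᵥ u - a : ℝ) : EReal) := by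
  constructor
  · intro hu
    refine le_antisymm (iSup_le fun x => ?_) (fenchel_young hxb u)
    have h := hu x
    by_cases hx : f x = ⊤
    · rw [hx]; exact bot_le
    · obtain ⟨b, hb⟩ : ∃ b : ℝ, f x = b := ⟨(f x).toReal, (EReal.coe_toReal hx (hbot x)).symm⟩
      rw [hb, hxb, ← EReal.coe_add, EReal.coe_le_coe_iff] at h
      rw [hb, ← EReal.coe_sub, EReal.coe_le_coe_iff]
      have hd : u ⬝ᵥ (x - xb) = u ⬝ᵥ x - u ⬝ᵥ xb := dotProduct_sub u x xb
      have hc1 : x ⬝ᵥ u = u ⬝ᵥ x := dotProduct_comm x u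
      have hc2 : xb ⬝ᵥ u = u ⬝ᵥ xb := dotProduct_comm xb u
      rw [hd] at h; rw [hc1, hc2]; linarith
  · intro h x
    have h2 : ((x ⬝ᵥ u : ℝ) : EReal) - f x ≤ ((xb ⬝ᵥ u - a : ℝ) : EReal) := by
      rw [← h]; exact term_le_conj u x
    by_cases hx : f x = ⊤
    · rw [hx]; exact le_top
    · obtain ⟨b, hb⟩ : ∃ b : ℝ, f x = b := ⟨(f x).toReal, (EReal.coe_toReal hx (hbot x)).symm⟩
      rw [hb, ← EReal.coe_sub, EReal.coe_le_coe_iff] at h2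
      rw [hb, hxb, ← EReal.coe_add, EReal.coe_le_coe_iff]
      have hd : u ⬝ᵥ (x - xb) = u ⬝ᵥ x - u ⬝ᵥ xb := dotProduct_sub u x xb
      have hc1 : x ⬝ᵥ u = u ⬝ᵥ x := dotProduct_comm x u
      have hc2 : xb ⬝ᵥ u = u ⬝ᵥ xb := dotProduct_comm xb u
      rw [hd]; rw [hc1, hc2] at h2; linarith

lemma kMinPt_iff (A : Set ((Fin n → ℝ) × ℝ)) (y : (Fin n → ℝ) × ℝ) :
    KMinPt n A y ↔ ∀ t : ℝ, 0 < t → (y.1, y.2 - t) ∉ A := by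
  unfold KMinPt
  rw [Set.eq_empty_iff_forall_notMem]
  constructor
  · intro h t ht hmem
    refine h (y.1, y.2 - t) ⟨?_, hmem⟩
    rw [Set.mem_sub]
    refine ⟨y, rfl, (0, t), ⟨⟨rfl, ht.le⟩, ?_⟩, ?_⟩
    · intro hc
      rw [Set.mem_neg] at hc
      have := hc.2
      simp only [Prod.snd_neg] at this
      linarith
    · ext <;> simp
  · rintro h z ⟨hz1, hz2⟩
    rw [Set.mem_sub] at hz1
    obtain ⟨a, ha, k, hk, hak⟩ := hz1
    rw [Set.mem_singleton_iff] at ha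
    subst ha
    obtain ⟨⟨hk1, hk2⟩, hk3⟩ := hk
    have hkpos : 0 < k.2 := by
      rcases lt_or_ge 0 k.2 with h' | h'
      · exact h'
      · exact absurd (Set.mem_neg.mpr
          (show -k ∈ Kcone n from ⟨by simp [hk1], by simpa using h'⟩)) hk3
    have hz : z = (a.1, a.2 - k.2) := by
      rw [← hak]; ext <;> simp [hk1]
    exact h k.2 hkpos (hz ▸ hz2)

lemma kmin_of_eq {y : (Fin n → ℝ) × ℝ} (h : (y.2 : EReal) = conj n f y.1) :
    KMinPt n (epi n (conj n f)) y := by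
  rw [kMinPt_iff]
  intro t ht hmem
  have h2 : conj n f y.1 ≤ ((y.2 - t : ℝ) : EReal) := hmem
  rw [← h, EReal.coe_le_coe_iff] at h2
  linarith

lemma eq_of_kmin (hdom : ∃ x, f x ≠ ⊤) (hbot : ∀ x, f x ≠ ⊥) {y : (Fin n → ℝ) × ℝ}
    (hy : y ∈ epi n (conj n f)) (hk : KMinPt n (epi n (conj n f)) y) :
    (y.2 : EReal) = conj n f y.1 := by
  by_contra hne
  have hlt : conj n f y.1 < (y.2 : EReal) := lt_of_le_of_ne hy (fun h => hne h.symm)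
  obtain ⟨c, hc⟩ : ∃ c : ℝ, conj n f y.1 = c :=
    ⟨(conj n f y.1).toReal,
      (EReal.coe_toReal (hlt.trans_le le_top).ne (conj_ne_bot hdom hbot y.1)).symm⟩
  rw [hc, EReal.coe_lt_coe_iff] at hlt
  rw [kMinPt_iff] at hk
  exact hk (y.2 - c) (by linarith) (by
    show conj n f y.1 ≤ ((y.2 - (y.2 - c) : ℝ) : EReal)
    rw [hc]; norm_num)

lemma clm_decomp (L : ((Fin n → ℝ) × ℝ) →L[ℝ] ℝ) (x : Fin n → ℝ) (r : ℝ) :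
    L (x, r) = x ⬝ᵥ (fun i => L (Pi.single i 1, 0)) + r * L (0, 1) := by
  have hx : ((x, r) : (Fin n → ℝ) × ℝ)
      = (∑ i, x i • ((Pi.single i (1:ℝ) : Fin n → ℝ), (0:ℝ))) + r • ((0 : Fin n → ℝ), (1:ℝ)) := by
    have h : ∀ i : Fin n, x i • ((Pi.single i (1:ℝ) : Fin n → ℝ), (0:ℝ))
        = ((Pi.single i (x i) : Fin n → ℝ), (0:ℝ)) := by
      intro i
      rw [Prod.smul_mk, smul_zero, ← Pi.single_smul]
      simp
    simp only [h]
    ext j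
    · rw [Prod.fst_add, Prod.fst_sum]
      simp only [Prod.smul_fst]
      rw [Finset.univ_sum_single]
      simp
    · rw [Prod.snd_add, Prod.snd_sum]
      simp
  rw [hx, map_add, map_sum]
  have h1 : L (r • ((0 : Fin n → ℝ), (1:ℝ))) = r * L (0, 1) := by
    rw [L.map_smul]; simp
  have h2 : ∀ i : Fin n, L (x i • ((Pi.single i (1:ℝ) : Fin n → ℝ), (0:ℝ)))
      = x i * L (Pi.single i 1, 0) := by
    intro i; rw [L.map_smul]; simp
  simp only [h1, h2]
  rfl

lemma f_le_of_supp (hdom : ∃ x, f x ≠ ⊤) (hbot : ∀ x, f x ≠ ⊥)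
    (hclosed : IsClosed (epi n f)) (hconv : Convex ℝ (epi n f))
    {xb : Fin n → ℝ} {β : ℝ}
    (hsupp : ∀ u : Fin n → ℝ, ∀ r : ℝ, conj n f u ≤ (r : EReal) → xb ⬝ᵥ u - r ≤ β)
    (hu0 : ∃ u0 : Fin n → ℝ, conj n f u0 ≠ ⊤) :
    f xb ≤ (β : EReal) := by
  by_contra hgt
  have hnotin : ((xb, β) : (Fin n → ℝ) × ℝ) ∉ epi n f := hgt
  obtain ⟨L, γ, hL', hγ'⟩ := geometric_hahn_banach_closed_point hconv hclosed hnotin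
  set w : Fin n → ℝ := fun i => L (Pi.single i 1, 0) with hw
  set c : ℝ := L (0, 1) with hc
  have hL : ∀ (x : Fin n → ℝ) (r : ℝ), f x ≤ (r : EReal) → x ⬝ᵥ w + r * c < γ := by
    intro x r hxr
    have := hL' (x, r) hxr
    rwa [clm_decomp] at this
  have hγ : γ < xb ⬝ᵥ w + β * c := by
    have := hγ'
    rwa [clm_decomp] at this
  -- epi f is nonempty
  obtain ⟨x₀, hx₀⟩ := hdom
  obtain ⟨b₀, hb₀⟩ : ∃ b : ℝ, f x₀ = b := ⟨(f x₀).toReal, (EReal.coe_toReal hx₀ (hbot x₀)).symm⟩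
  -- c ≤ 0
  have hcle : c ≤ 0 := by
    by_contra hcpos
    push_neg at hcpos
    set t : ℝ := max 0 ((γ - x₀ ⬝ᵥ w - b₀ * c) / c) + 1 with ht
    have htge : (γ - x₀ ⬝ᵥ w - b₀ * c) / c ≤ t - 1 := by
      rw [ht]; simp [le_max_right]
    have htc : γ - x₀ ⬝ᵥ w - b₀ * c ≤ (t - 1) * c := by
      rw [div_le_iff₀ hcpos] at htge; linarith [htge]
    have ht1 : (1:ℝ) ≤ t := by
      have := le_max_left (0:ℝ) ((γ - x₀ ⬝ᵥ w - b₀ * c) / c)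
      rw [ht]; linarith
    have := hL x₀ (b₀ + t) (by
      rw [hb₀]; exact EReal.coe_le_coe_iff.mpr (by linarith))
    nlinarith [this, htc, hcpos]
  rcases lt_or_eq_of_le hcle with hclt | hceq
  · -- c < 0 case
    have hcpos : 0 < -c := by linarith
    have hc0 : (-c) ≠ 0 := ne_of_gt hcpos
    have hcne : c ≠ 0 := ne_of_lt hclt
    set w' : Fin n → ℝ := (-c)⁻¹ • w with hw'
    set γ' : ℝ := (-c)⁻¹ * γ with hγ''
    have hipos : 0 < (-c)⁻¹ := inv_pos.mpr hcpos
    have hconj : conj n f w' ≤ (γ' : EReal) := by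
      apply iSup_le
      intro x
      by_cases hx : f x = ⊤
      · rw [hx]; exact bot_le
      · obtain ⟨b, hb⟩ : ∃ b : ℝ, f x = b := ⟨(f x).toReal, (EReal.coe_toReal hx (hbot x)).symm⟩
        have h := hL x b (by rw [hb])
        rw [hb, ← EReal.coe_sub, EReal.coe_le_coe_iff]
        have hdw : x ⬝ᵥ w' = (-c)⁻¹ * (x ⬝ᵥ w) := by
          rw [hw', dotProduct_smul]; rfl
        have key : (-c)⁻¹ * (x ⬝ᵥ w + b * c) ≤ (-c)⁻¹ * γ :=
          mul_le_mul_of_nonneg_left h.le hipos.le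
        have expand : (-c)⁻¹ * (x ⬝ᵥ w + b * c) = (-c)⁻¹ * (x ⬝ᵥ w) - b := by
          field_simp
          ring
        rw [expand] at key
        rw [hdw, hγ'']
        linarith
    have hfin := hsupp w' γ' hconj
    have hdw : xb ⬝ᵥ w' = (-c)⁻¹ * (xb ⬝ᵥ w) := by
      rw [hw', dotProduct_smul]; rfl
    rw [hdw, hγ''] at hfin
    have key : (-c)⁻¹ * γ < (-c)⁻¹ * (xb ⬝ᵥ w + β * c) :=
      mul_lt_mul_of_pos_left hγ hipos
    have expand : (-c)⁻¹ * (xb ⬝ᵥ w + β * c) = (-c)⁻¹ * (xb ⬝ᵥ w) - β := by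
      field_simp
      ring
    rw [expand] at key
    linarith
  · -- c = 0 case
    obtain ⟨u0, hu0top⟩ := hu0
    obtain ⟨r0, hr0⟩ : ∃ r : ℝ, conj n f u0 = r :=
      ⟨(conj n f u0).toReal, (EReal.coe_toReal hu0top (conj_ne_bot ⟨x₀, hx₀⟩ hbot u0)).symm⟩
    rw [hceq, mul_zero, add_zero] at hγ
    have hD : 0 < xb ⬝ᵥ w - γ := by linarith
    set t : ℝ := max 1 ((β - (xb ⬝ᵥ u0 - r0) + 1) / (xb ⬝ᵥ w - γ)) with htdef
    have htpos : 0 < t := lt_of_lt_of_le one_pos (le_max_left _ _)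
    have htD : β - (xb ⬝ᵥ u0 - r0) + 1 ≤ t * (xb ⬝ᵥ w - γ) := by
      have h1 : (β - (xb ⬝ᵥ u0 - r0) + 1) / (xb ⬝ᵥ w - γ) ≤ t := le_max_right _ _
      have h2 := mul_le_mul_of_nonneg_right h1 hD.le
      rwa [div_mul_cancel₀ _ (ne_of_gt hD)] at h2
    have hconj_t : conj n f (u0 + t • w) ≤ ((r0 + t * γ : ℝ) : EReal) := by
      apply iSup_le
      intro x
      by_cases hx : f x = ⊤
      · rw [hx]; exact bot_le
      · obtain ⟨b, hb⟩ : ∃ b : ℝ, f x = b := ⟨(f x).toReal, (EReal.coe_toReal hx (hbot x)).symm⟩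
        have h1 : x ⬝ᵥ u0 - b ≤ r0 := by
          have h := term_le_conj (f := f) u0 x
          rw [hr0, hb, ← EReal.coe_sub, EReal.coe_le_coe_iff] at h
          exact h
        have h2 := hL x b (by rw [hb])
        rw [hceq, mul_zero, add_zero] at h2
        rw [hb, ← EReal.coe_sub, EReal.coe_le_coe_iff]
        have hd1 : x ⬝ᵥ (u0 + t • w) = x ⬝ᵥ u0 + t * (x ⬝ᵥ w) := by
          rw [dotProduct_add, dotProduct_smul]; rfl
        rw [hd1]
        nlinarith [mul_le_mul_of_nonneg_left h2.le htpos.le]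
    have hfin := hsupp (u0 + t • w) (r0 + t * γ) hconj_t
    have hd2 : xb ⬝ᵥ (u0 + t • w) = xb ⬝ᵥ u0 + t * (xb ⬝ᵥ w) := by
      rw [dotProduct_add, dotProduct_smul]; rfl
    rw [hd2] at hfin
    nlinarith [hfin, htD]

end Helpers

/-- F* ⊆ epi f* is a K-minimal exposed face of epi f* iff
F* = {(u,f*(u)) : u ∈ ∂f(x̄)} for some x̄ ∈ dom f with ∂f(x̄) ≠ ∅. -/
theorem stmt4 (n : ℕ) (f : (Fin n → ℝ) → EReal)
    (hdom : ∃ x, f x ≠ ⊤) (hbot : ∀ x, f x ≠ ⊥)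
    (hclosed : IsClosed (epi n f)) (hconv : Convex ℝ (epi n f))
    (Fs : Set ((Fin n → ℝ) × ℝ)) (hFs : Fs ⊆ epi n (conj n f)) :
    IsKMinExpFace n (epi n (conj n f)) Fs ↔
      ∃ xb : Fin n → ℝ, f xb ≠ ⊤ ∧ (subdiff n f xb).Nonempty ∧
        Fs = {q : (Fin n → ℝ) × ℝ | (q.2 : EReal) = conj n f q.1 ∧ q.1 ∈ subdiff n f xb} := by
  constructor
  · rintro ⟨⟨v, s, α, ⟨hvs, hne, hsupp⟩, hFeq⟩, hkmin⟩
    obtain ⟨q₀, hq₀⟩ := hne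
    have hq₀Fs : q₀ ∈ Fs := by rw [hFeq]; exact hq₀
    have hq₀A : q₀ ∈ epi n (conj n f) := hq₀.2
    have hq₀H : q₀.1 ⬝ᵥ v + q₀.2 * s = α := hq₀.1
    have hexact : ∀ q ∈ Fs, (q.2 : EReal) = conj n f q.1 := fun q hq =>
      eq_of_kmin hdom hbot (hFs hq) (hkmin q hq)
    have hq₀e := hexact q₀ hq₀Fs
    have hplus : ∀ t : ℝ, 0 ≤ t → ((q₀.1, q₀.2 + t) : (Fin n → ℝ) × ℝ) ∈ epi n (conj n f) := by
      intro t ht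
      show conj n f q₀.1 ≤ ((q₀.2 + t : ℝ) : EReal)
      rw [← hq₀e]; exact EReal.coe_le_coe_iff.mpr (by linarith)
    have hsle : s ≤ 0 := by
      have h := hsupp _ (hplus 1 zero_le_one)
      simp only at h
      nlinarith [h, hq₀H]
    have hslt : s < 0 := by
      rcases lt_or_eq_of_le hsle with h | h
      · exact h
      · exfalso
        have h2 : ((q₀.1, q₀.2 + 1) : (Fin n → ℝ) × ℝ) ∈ Hyp n v s α := by
          show q₀.1 ⬝ᵥ v + (q₀.2 + 1) * s = α
          rw [h] at hq₀H ⊢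
          linarith [hq₀H]
        have h3 : ((q₀.1, q₀.2 + 1) : (Fin n → ℝ) × ℝ) ∈ Fs := by
          rw [hFeq]; exact ⟨h2, hplus 1 zero_le_one⟩
        have h4 := hexact _ h3
        rw [← hq₀e] at h4
        rw [EReal.coe_eq_coe_iff] at h4
        simp only at h4
        linarith
    have hspos : 0 < -s := by linarith
    have hs0 : (-s) ≠ 0 := ne_of_gt hspos
    set xb : Fin n → ℝ := (-s)⁻¹ • v with hxbdef
    set β : ℝ := (-s)⁻¹ * α with hβdef
    have hxbdot : ∀ u : Fin n → ℝ, xb ⬝ᵥ u = (-s)⁻¹ * (u ⬝ᵥ v) := by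
      intro u
      rw [hxbdef, smul_dotProduct, dotProduct_comm]; rfl
    have hmul : (-s)⁻¹ * s = -1 := by rw [inv_neg, neg_mul, inv_mul_cancel₀ (ne_of_lt hslt)]
    have hscale1 : ∀ P r : ℝ, P + r * s = α → (-s)⁻¹ * P - r = β := by
      intro P r h
      have e1 : (-s)⁻¹ * (P + r * s) = (-s)⁻¹ * α := by rw [h]
      have e2 : (-s)⁻¹ * (P + r * s) = (-s)⁻¹ * P + ((-s)⁻¹ * s) * r := by ring
      rw [e2, hmul] at e1
      rw [hβdef]; linarith
    have hscale2 : ∀ P r : ℝ, (-s)⁻¹ * P - r = β → P + r * s = α := by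
      intro P r h
      rw [hβdef] at h
      have e1 : (-s) * ((-s)⁻¹ * P - r) = (-s) * ((-s)⁻¹ * α) := by rw [h]
      have hm2 : (-s) * (-s)⁻¹ = 1 := mul_inv_cancel₀ hs0
      have e2 : (-s) * ((-s)⁻¹ * P - r) = ((-s) * (-s)⁻¹) * P + r * s := by
        ring
      have e3 : (-s) * ((-s)⁻¹ * α) = ((-s) * (-s)⁻¹) * α := by ring
      rw [e2, e3, hm2] at e1
      linarith
    have hsupp' : ∀ u : Fin n → ℝ, ∀ r : ℝ, conj n f u ≤ (r : EReal) → xb ⬝ᵥ u - r ≤ β := by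
      intro u r hur
      have h := hsupp (u, r) hur
      simp only at h
      rw [hxbdot]
      rcases lt_or_eq_of_le h with h' | h'
      · -- strict: (-s)⁻¹ * (u⬝v) - r < β
        have e1 : (-s)⁻¹ * (u ⬝ᵥ v + r * s) ≤ (-s)⁻¹ * α :=
          mul_le_mul_of_nonneg_left h (inv_pos.mpr hspos).le
        have e2 : (-s)⁻¹ * (u ⬝ᵥ v + r * s) = (-s)⁻¹ * (u ⬝ᵥ v) + ((-s)⁻¹ * s) * r := by ring
        rw [e2, hmul] at e1
        rw [hβdef]; linarith
      · have := hscale1 _ _ h'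
        linarith [this]
    have hu0ne : conj n f q₀.1 ≠ ⊤ := by rw [← hq₀e]; exact EReal.coe_ne_top _
    have hfle : f xb ≤ (β : EReal) :=
      f_le_of_supp hdom hbot hclosed hconv hsupp' ⟨q₀.1, hu0ne⟩
    have hH0 : xb ⬝ᵥ q₀.1 - q₀.2 = β := by
      rw [hxbdot]; exact hscale1 _ _ hq₀H
    have hfeq : f xb = (β : EReal) := by
      refine le_antisymm hfle ?_
      obtain ⟨b, hb⟩ : ∃ b : ℝ, f xb = b :=
        ⟨(f xb).toReal, (EReal.coe_toReal
          (lt_of_le_of_lt hfle (EReal.coe_lt_top β)).ne (hbot xb)).symm⟩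
      have h := term_le_conj (f := f) q₀.1 xb
      rw [hb, ← EReal.coe_sub, ← hq₀e, EReal.coe_le_coe_iff] at h
      rw [hb, EReal.coe_le_coe_iff]
      linarith
    refine ⟨xb, by rw [hfeq]; exact EReal.coe_ne_top β, ⟨q₀.1, ?_⟩, ?_⟩
    · rw [mem_subdiff_iff hbot hfeq]
      rw [← hq₀e, EReal.coe_eq_coe_iff]
      linarith [hH0]
    · ext q
      simp only [Set.mem_setOf_eq]
      constructor
      · intro hq
        have he := hexact q hq
        have hqH : q ∈ Hyp n v s α ∩ epi n (conj n f) := by rw [← hFeq]; exact hq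
        have hH : xb ⬝ᵥ q.1 - q.2 = β := by
          rw [hxbdot]; exact hscale1 _ _ hqH.1
        refine ⟨he, ?_⟩
        rw [mem_subdiff_iff hbot hfeq, ← he, EReal.coe_eq_coe_iff]
        linarith
      · rintro ⟨h1, h2⟩
        rw [mem_subdiff_iff hbot hfeq] at h2
        have hq2 : q.2 = xb ⬝ᵥ q.1 - β := by
          rw [← EReal.coe_eq_coe_iff, h1, h2]
        rw [hFeq]
        refine ⟨?_, ?_⟩
        · show q.1 ⬝ᵥ v + q.2 * s = α
          apply hscale2
          rw [← hxbdot]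
          linarith [hq2]
        · show conj n f q.1 ≤ (q.2 : EReal)
          rw [← h1]
  · rintro ⟨xb, hxbtop, ⟨u0, hu0⟩, hFsEq⟩
    obtain ⟨a, ha⟩ : ∃ a : ℝ, f xb = a :=
      ⟨(f xb).toReal, (EReal.coe_toReal hxbtop (hbot xb)).symm⟩
    have hsub : ∀ u : Fin n → ℝ,
        u ∈ subdiff n f xb ↔ conj n f u = ((xb ⬝ᵥ u - a : ℝ) : EReal) :=
      fun u => mem_subdiff_iff hbot ha u
    constructor
    · refine ⟨xb, -1, a, ⟨?_, ?_, ?_⟩, ?_⟩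
      · intro hc
        have := congrArg Prod.snd hc
        simp at this
      · refine ⟨(u0, xb ⬝ᵥ u0 - a), ?_, ?_⟩
        · show u0 ⬝ᵥ xb + (xb ⬝ᵥ u0 - a) * (-1) = a
          rw [dotProduct_comm]; ring
        · show conj n f u0 ≤ ((xb ⬝ᵥ u0 - a : ℝ) : EReal)
          rw [(hsub u0).mp hu0]
      · intro p hp
        have h1 : ((xb ⬝ᵥ p.1 - a : ℝ) : EReal) ≤ (p.2 : EReal) :=
          le_trans (fenchel_young ha p.1) hp
        rw [EReal.coe_le_coe_iff] at h1
        show p.1 ⬝ᵥ xb + p.2 * (-1) ≤ a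
        rw [dotProduct_comm]
        linarith
      · rw [hFsEq]
        ext q
        simp only [Set.mem_setOf_eq]
        constructor
        · rintro ⟨h1, h2⟩
          have h3 := (hsub q.1).mp h2
          have hq2 : q.2 = xb ⬝ᵥ q.1 - a := by
            rw [← EReal.coe_eq_coe_iff, h1, h3]
          refine ⟨?_, ?_⟩
          · show q.1 ⬝ᵥ xb + q.2 * (-1) = a
            rw [dotProduct_comm]
            linarith [hq2]
          · show conj n f q.1 ≤ (q.2 : EReal)
            rw [← h1]
        · rintro ⟨h1, h2⟩
          have hh : q.1 ⬝ᵥ xb + q.2 * (-1) = a := h1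
          rw [dotProduct_comm] at hh
          have hq2 : q.2 = xb ⬝ᵥ q.1 - a := by linarith
          have hle : conj n f q.1 ≤ (q.2 : EReal) := h2
          have hge : ((xb ⬝ᵥ q.1 - a : ℝ) : EReal) ≤ conj n f q.1 := fenchel_young ha q.1
          have heq : conj n f q.1 = ((xb ⬝ᵥ q.1 - a : ℝ) : EReal) := by
            refine le_antisymm ?_ hge
            rw [hq2] at hle
            exact hle
          refine ⟨?_, (hsub q.1).mpr heq⟩
          rw [heq, hq2]
    · intro y hy
      rw [hFsEq] at hy
      exact kmin_of_eq hy.1
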